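/- Residual lifetime convergence for the Gaussian tail: if R(x) = P(N > x) for N standard normal, z = (|x₀|/σ)√(2λ) with λ > 0 and x₀ < 0 fixed, then for every t ∈ ℝ, lim_{σ→0} R(z/√(1 - σ² e^{-2λt})) / R(z) = exp(-x₀² λ e^{-2λ t}). -/

import Mathlib

open MeasureTheory ProbabilityTheory Filter
open Set

noncomputable def gT (x : ℝ) : ℝ := ∫ v in Set.Ioi x, Real.exp (-v^2/2)

lemma integrable_expneg : Integrable (fun v : ℝ => Real.exp (-v^2/2)) := by
  have := integrable_exp_neg_mul_sq (b := 1/2) (by norm_num)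
  convert this using 2 with v
  ring_nf

lemma gT_pos (x : ℝ) : 0 < gT x := by
  rw [gT, setIntegral_pos_iff_support_of_nonneg_ae]
  · have : Function.support (fun v : ℝ => Real.exp (-v^2/2)) = Set.univ := by
      ext v; simp [Real.exp_ne_zero]
    rw [this, Set.univ_inter]
    simp [Real.volume_Ioi]
  · exact ae_of_all _ fun v => (Real.exp_pos _).le
  · exact integrable_expneg.integrableOn

lemma hasDerivAt_negexp (v : ℝ) :
    HasDerivAt (fun v : ℝ => -Real.exp (-v^2/2)) (v * Real.exp (-v^2/2)) v := by
  have h1 : HasDerivAt (fun v : ℝ => -v^2/2) (-v) v := by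
    have := ((hasDerivAt_pow 2 v).neg).div_const 2
    refine this.congr_deriv ?_; push_cast; ring
  have := (h1.exp).neg
  refine this.congr_deriv ?_; ring

lemma tendsto_expneg_atTop : Tendsto (fun v : ℝ => Real.exp (-v^2/2)) atTop (nhds 0) := by
  apply Real.tendsto_exp_atBot.comp
  have h : Tendsto (fun v : ℝ => v^2/2) atTop atTop :=
    (tendsto_pow_atTop (by norm_num)).atTop_div_const (by norm_num)
  have := tendsto_neg_atBot_iff.mpr h
  exact this.congr (fun v => by ring_nf)

lemma momentA {x : ℝ} (hx : 0 < x) :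
    ∫ v in Set.Ioi x, v * Real.exp (-v^2/2) = Real.exp (-x^2/2) := by
  have := integral_Ioi_of_hasDerivAt_of_nonneg' (a := x)
    (g := fun v : ℝ => -Real.exp (-v^2/2)) (g' := fun v => v * Real.exp (-v^2/2))
    (fun v _ => hasDerivAt_negexp v)
    (fun v hv => mul_nonneg (le_of_lt (hx.trans hv)) (Real.exp_pos _).le)
    (by simpa using tendsto_expneg_atTop.neg)
  simpa using this

lemma momentA_int {x : ℝ} (hx : 0 < x) :
    IntegrableOn (fun v => v * Real.exp (-v^2/2)) (Set.Ioi x) :=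
  integrableOn_Ioi_deriv_of_nonneg' (g := fun v : ℝ => -Real.exp (-v^2/2))
    (fun v _ => hasDerivAt_negexp v)
    (fun v hv => mul_nonneg (le_of_lt (hx.trans hv)) (Real.exp_pos _).le)
    (by simpa using tendsto_expneg_atTop.neg)

lemma hasDerivAt_millf {v : ℝ} (hv : 0 < v) :
    HasDerivAt (fun v : ℝ => -Real.exp (-v^2/2) / v)
      ((1 + (v^2)⁻¹) * Real.exp (-v^2/2)) v := by
  have := (hasDerivAt_negexp v).div (hasDerivAt_id v) (ne_of_gt hv)
  refine this.congr_deriv ?_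
  simp only [id]
  field_simp
  ring

lemma tendsto_millf : Tendsto (fun v : ℝ => -Real.exp (-v^2/2) / v) atTop (nhds 0) := by
  have := tendsto_expneg_atTop.neg.mul tendsto_inv_atTop_zero
  simpa [div_eq_mul_inv] using this

lemma millB {x : ℝ} (hx : 0 < x) :
    ∫ v in Set.Ioi x, (1 + (v^2)⁻¹) * Real.exp (-v^2/2) = Real.exp (-x^2/2) / x := by
  have := integral_Ioi_of_hasDerivAt_of_nonneg' (a := x)
    (g := fun v : ℝ => -Real.exp (-v^2/2) / v)
    (g' := fun v => (1 + (v^2)⁻¹) * Real.exp (-v^2/2))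
    (fun v hv => hasDerivAt_millf (hx.trans_le hv))
    (fun v hv => mul_nonneg (by positivity) (Real.exp_pos _).le)
    tendsto_millf
  rw [this]; ring

lemma millB_int {x : ℝ} (hx : 0 < x) :
    IntegrableOn (fun v => (1 + (v^2)⁻¹) * Real.exp (-v^2/2)) (Set.Ioi x) :=
  integrableOn_Ioi_deriv_of_nonneg' (g := fun v : ℝ => -Real.exp (-v^2/2) / v)
    (fun v hv => hasDerivAt_millf (hx.trans_le hv))
    (fun v hv => mul_nonneg (by positivity) (Real.exp_pos _).le)
    tendsto_millf

/-- Mill-type lower bound. -/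
lemma mill_lower {x : ℝ} (hx : 0 < x) :
    Real.exp (-x^2/2) ≤ (x + 1/x) * gT x := by
  have hmono : ∫ v in Set.Ioi x, (1 + (v^2)⁻¹) * Real.exp (-v^2/2)
      ≤ ∫ v in Set.Ioi x, (1 + (x^2)⁻¹) * Real.exp (-v^2/2) := by
    apply setIntegral_mono_on (millB_int hx)
      (integrable_expneg.integrableOn.const_mul _) measurableSet_Ioi
    intro v hv
    have hvx : x ≤ v := le_of_lt hv
    gcongr
  rw [millB hx, integral_const_mul] at hmono
  have hgx := gT_pos x
  rw [gT] at hgx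
  have h2 : Real.exp (-x^2/2) / x ≤ (1 + (x^2)⁻¹) * gT x := by rw [gT]; exact hmono
  have := (div_le_iff₀ hx).mp h2
  calc Real.exp (-x^2/2) ≤ (1 + (x^2)⁻¹) * gT x * x := this
    _ = (x + 1/x) * gT x := by field_simp

/-- Translation identity. -/
lemma gT_translate (x δ : ℝ) :
    ∫ v in Set.Ioi x, Real.exp (-(v+δ)^2/2) = gT (x + δ) := by
  rw [gT]
  have hmp : MeasurePreserving (fun v : ℝ => v + δ) volume volume :=
    measurePreserving_add_right volume δ
  have hemb : MeasurableEmbedding (fun v : ℝ => v + δ) :=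
    (Homeomorph.addRight δ).measurableEmbedding
  have := hmp.setIntegral_preimage_emb hemb
    (fun v => Real.exp (-v^2/2)) (Set.Ioi (x + δ))
  rw [Set.preimage_add_const_Ioi] at this
  simpa using this

lemma integrable_expneg_shift (x δ : ℝ) :
    IntegrableOn (fun v : ℝ => Real.exp (-(v+δ)^2/2)) (Set.Ioi x) := by
  have : Integrable (fun v : ℝ => Real.exp (-(v+δ)^2/2)) :=
    integrable_expneg.comp_add_right δ
  exact this.integrableOn

lemma gT_upper {x δ : ℝ} (hx : 0 < x) (hδ : 0 ≤ δ) :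
    gT (x+δ) ≤ Real.exp (-(x*δ + δ^2/2)) * gT x := by
  rw [← gT_translate, gT, ← integral_const_mul]
  apply setIntegral_mono_on (integrable_expneg_shift x δ)
    (integrable_expneg.integrableOn.const_mul _) measurableSet_Ioi
  intro v hv
  have hvx : x ≤ v := le_of_lt hv
  rw [← Real.exp_add]
  apply Real.exp_le_exp.mpr
  nlinarith [mul_le_mul_of_nonneg_right hvx hδ]

lemma gT_lower {x δ : ℝ} (hx : 0 < x) (hδ : 0 ≤ δ) :
    Real.exp (-(x*δ + δ^2/2)) * (1 - δ/x) * gT x ≤ gT (x+δ) := by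
  have key : Real.exp (-(x*δ + δ^2/2)) * (gT x - δ * (Real.exp (-x^2/2) - x * gT x))
      ≤ gT (x+δ) := by
    rw [← gT_translate]
    have hint : ∫ v in Set.Ioi x, ((1 + x*δ) - δ * v) * Real.exp (-v^2/2)
        = gT x - δ * (Real.exp (-x^2/2) - x * gT x) := by
      have h1 : IntegrableOn (fun v : ℝ => (1 + x*δ) * Real.exp (-v^2/2)) (Set.Ioi x) :=
        integrable_expneg.integrableOn.const_mul _
      have h2 : IntegrableOn (fun v : ℝ => δ * (v * Real.exp (-v^2/2))) (Set.Ioi x) :=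
        (momentA_int hx).const_mul _
      have : ∫ v in Set.Ioi x, ((1 + x*δ) - δ * v) * Real.exp (-v^2/2)
          = (∫ v in Set.Ioi x, (1 + x*δ) * Real.exp (-v^2/2))
            - ∫ v in Set.Ioi x, δ * (v * Real.exp (-v^2/2)) := by
        rw [← integral_sub h1 h2]
        congr 1 with v
        ring
      rw [this, integral_const_mul, integral_const_mul, momentA hx]
      rw [gT]
      ring
    calc Real.exp (-(x*δ + δ^2/2)) * (gT x - δ * (Real.exp (-x^2/2) - x * gT x))
        = ∫ v in Set.Ioi x, Real.exp (-(x*δ + δ^2/2)) * (((1 + x*δ) - δ * v) * Real.exp (-v^2/2)) := by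
          rw [integral_const_mul, hint]
      _ ≤ ∫ v in Set.Ioi x, Real.exp (-(v+δ)^2/2) := by
          have hI0 : IntegrableOn (fun v : ℝ => (1 + x*δ) * Real.exp (-v^2/2)
              - δ * (v * Real.exp (-v^2/2))) (Set.Ioi x) :=
            (integrable_expneg.integrableOn.const_mul _).sub ((momentA_int hx).const_mul δ)
          have hI : IntegrableOn (fun v : ℝ =>
              Real.exp (-(x*δ + δ^2/2)) * (((1 + x*δ) - δ * v) * Real.exp (-v^2/2)))
              (Set.Ioi x) := by
            have hfe : (fun v : ℝ =>
                Real.exp (-(x*δ + δ^2/2)) * (((1 + x*δ) - δ * v) * Real.exp (-v^2/2)))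
                = fun v : ℝ => Real.exp (-(x*δ + δ^2/2)) * ((1 + x*δ) * Real.exp (-v^2/2)
                  - δ * (v * Real.exp (-v^2/2))) := by
              funext v; ring
            rw [hfe]
            exact hI0.const_mul _
          apply setIntegral_mono_on hI (integrable_expneg_shift x δ) measurableSet_Ioi
          intro v hv
          have hvx : x ≤ v := le_of_lt hv
          have hexp : (1 : ℝ) + x*δ - δ * v ≤ Real.exp (-(v - x) * δ) := by
            have := Real.add_one_le_exp (-(v - x) * δ)
            nlinarith
          have heq : Real.exp (-(v+δ)^2/2)
              = Real.exp (-(x*δ + δ^2/2)) * (Real.exp (-(v - x) * δ) * Real.exp (-v^2/2)) := by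
            rw [← Real.exp_add, ← Real.exp_add]
            congr 1
            ring
          rw [heq]
          have h3 : ((1 + x*δ) - δ * v) ≤ Real.exp (-(v - x) * δ) := by linarith
          apply mul_le_mul_of_nonneg_left _ (Real.exp_pos _).le
          exact mul_le_mul_of_nonneg_right h3 (Real.exp_pos _).le
  refine le_trans ?_ key
  rw [mul_assoc]
  apply mul_le_mul_of_nonneg_left _ (Real.exp_pos _).le
  have hm : Real.exp (-x^2/2) - x * gT x ≤ gT x / x := by
    have h5 := mill_lower hx
    have h4 : (x + 1/x) * gT x = x * gT x + gT x / x := by field_simp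
    linarith
  have hgx := (gT_pos x).le
  have : δ * (Real.exp (-x^2/2) - x * gT x) ≤ δ * (gT x / x) :=
    mul_le_mul_of_nonneg_left hm hδ
  have hdg : (1 - δ/x) * gT x = gT x - δ * (gT x / x) := by field_simp
  linarith

lemma hasDerivAt_invsqrt : HasDerivAt (fun ε : ℝ => (Real.sqrt (1-ε))⁻¹) (1/2) 0 := by
  have h1 : HasDerivAt (fun ε : ℝ => 1 - ε) (-1) 0 := by
    simpa using (hasDerivAt_id (0:ℝ)).const_sub 1
  have h2' : HasDerivAt Real.sqrt (1/2) ((1:ℝ) - 0) := by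
    rw [show (1:ℝ) - 0 = 1 by norm_num]
    simpa [Real.sqrt_one] using Real.hasDerivAt_sqrt one_ne_zero
  have h3 := h2'.comp 0 h1
  have h4 := h3.inv (by simp [Real.sqrt_one])
  refine h4.congr_deriv ?_
  norm_num [Real.sqrt_one]

lemma tendsto_slope_invsqrt :
    Tendsto (fun ε : ℝ => ((Real.sqrt (1-ε))⁻¹ - 1)/ε) (nhdsWithin 0 {(0:ℝ)}ᶜ) (nhds (1/2)) := by
  have := hasDerivAt_iff_tendsto_slope.mp hasDerivAt_invsqrt
  refine this.congr fun ε => ?_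
  rw [slope_def_field]
  simp [Real.sqrt_one]

lemma ratio_tendsto {c k : ℝ} (hc : 0 < c) (hk : 0 < k) :
    Tendsto (fun σ : ℝ => gT ((c/σ) / Real.sqrt (1 - σ^2*k)) / gT (c/σ))
      (nhdsWithin 0 (Set.Ioi 0)) (nhds (Real.exp (-(c^2*k/2)))) := by
  set w : ℝ → ℝ := fun σ => (Real.sqrt (1 - σ^2*k))⁻¹ - 1 with hw_def
  set z : ℝ → ℝ := fun σ => c/σ with hz_def
  set δ : ℝ → ℝ := fun σ => z σ * w σ with hδ_def
  -- ε → 0 within positives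
  have hε0 : Tendsto (fun σ : ℝ => σ^2*k) (nhdsWithin 0 (Set.Ioi 0)) (nhds 0) := by
    have : Tendsto (fun σ : ℝ => σ^2*k) (nhds 0) (nhds (0^2*k)) := by
      exact ((continuous_pow 2).mul continuous_const).tendsto 0
    simpa using this.mono_left nhdsWithin_le_nhds
  -- w → 0
  have hw0 : Tendsto w (nhdsWithin 0 (Set.Ioi 0)) (nhds 0) := by
    have hcont : Tendsto (fun u : ℝ => (Real.sqrt (1-u))⁻¹ - 1) (nhds 0) (nhds 0) := by
      have h1 : ContinuousAt (fun u : ℝ => (Real.sqrt (1-u))⁻¹ - 1) 0 := by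
        apply ContinuousAt.sub _ continuousAt_const
        apply ContinuousAt.inv₀
        · exact (Real.continuous_sqrt.comp (continuous_const.sub continuous_id)).continuousAt
        · simp [Real.sqrt_one]
      have := h1.tendsto
      simpa [Real.sqrt_one] using this
    exact hcont.comp hε0
  -- z * δ → c^2*k/2
  have hεne : Tendsto (fun σ : ℝ => σ^2*k) (nhdsWithin 0 (Set.Ioi 0))
      (nhdsWithin 0 {(0:ℝ)}ᶜ) := by
    rw [tendsto_nhdsWithin_iff]
    refine ⟨hε0, ?_⟩
    filter_upwards [self_mem_nhdsWithin] with σ (hσ : 0 < σ)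
    simp only [Set.mem_compl_iff, Set.mem_singleton_iff]
    positivity
  have hzd : Tendsto (fun σ => z σ * δ σ) (nhdsWithin 0 (Set.Ioi 0)) (nhds (c^2*k/2)) := by
    have h1 : Tendsto (fun σ : ℝ => c^2*k * (((Real.sqrt (1-σ^2*k))⁻¹ - 1)/(σ^2*k)))
        (nhdsWithin 0 (Set.Ioi 0)) (nhds (c^2*k * (1/2))) :=
      (tendsto_slope_invsqrt.comp hεne).const_mul _
    have h2 : (fun σ : ℝ => c^2*k * (((Real.sqrt (1-σ^2*k))⁻¹ - 1)/(σ^2*k)))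
        =ᶠ[nhdsWithin 0 (Set.Ioi 0)] (fun σ => z σ * δ σ) := by
      filter_upwards [self_mem_nhdsWithin] with σ (hσ : 0 < σ)
      simp only [hδ_def, hz_def, hw_def]
      field_simp
    have := h1.congr' h2
    convert this using 2
    ring
  -- δ^2/2 → 0
  have hdd : Tendsto (fun σ => δ σ^2/2) (nhdsWithin 0 (Set.Ioi 0)) (nhds 0) := by
    have h1 : Tendsto (fun σ => (z σ * δ σ) * w σ) (nhdsWithin 0 (Set.Ioi 0))
        (nhds (c^2*k/2 * 0)) := hzd.mul hw0
    have h2 : (fun σ => (z σ * δ σ) * w σ) = fun σ => δ σ^2 := by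
      funext σ; simp only [hδ_def]; ring
    rw [h2] at h1
    simpa using h1.div_const 2
  -- exponential upper bound tendsto
  have hup : Tendsto (fun σ => Real.exp (-(z σ * δ σ + δ σ^2/2)))
      (nhdsWithin 0 (Set.Ioi 0)) (nhds (Real.exp (-(c^2*k/2)))) := by
    have := (Real.continuous_exp.tendsto _).comp ((hzd.add hdd).neg)
    simpa [Function.comp_def] using this
  have hlow : Tendsto (fun σ => Real.exp (-(z σ * δ σ + δ σ^2/2)) * (1 - w σ))
      (nhdsWithin 0 (Set.Ioi 0)) (nhds (Real.exp (-(c^2*k/2)))) := by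
    have hone : Tendsto (fun σ : ℝ => 1 - w σ) (nhdsWithin 0 (Set.Ioi 0)) (nhds (1 - 0)) :=
      (tendsto_const_nhds (x := (1:ℝ))).sub hw0
    have := hup.mul hone
    simpa using this
  -- eventual bounds
  have hev : ∀ᶠ σ in nhdsWithin 0 (Set.Ioi 0), (0 : ℝ) < σ ∧ σ^2*k < 1 := by
    filter_upwards [self_mem_nhdsWithin, hε0.eventually_lt_const one_pos] with σ h1 h2
    exact ⟨h1, h2⟩
  have hbound : ∀ᶠ σ in nhdsWithin 0 (Set.Ioi 0),
      Real.exp (-(z σ * δ σ + δ σ^2/2)) * (1 - w σ)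
        ≤ gT ((c/σ) / Real.sqrt (1 - σ^2*k)) / gT (c/σ)
      ∧ gT ((c/σ) / Real.sqrt (1 - σ^2*k)) / gT (c/σ)
        ≤ Real.exp (-(z σ * δ σ + δ σ^2/2)) := by
    filter_upwards [hev] with σ ⟨hσ, hε1⟩
    have hzpos : 0 < z σ := div_pos hc hσ
    have h1ε : 0 < 1 - σ^2*k := by linarith
    have hsq : 0 < Real.sqrt (1 - σ^2*k) := Real.sqrt_pos.mpr h1ε
    have hsqle : Real.sqrt (1 - σ^2*k) ≤ 1 := by
      calc Real.sqrt (1 - σ^2*k) ≤ Real.sqrt 1 := Real.sqrt_le_sqrt (by nlinarith [mul_nonneg (sq_nonneg σ) hk.le])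
        _ = 1 := Real.sqrt_one
    have hwnn : 0 ≤ w σ := by
      simp only [hw_def, sub_nonneg]
      exact (one_le_inv₀ hsq).mpr hsqle
    have hδnn : 0 ≤ δ σ := mul_nonneg hzpos.le hwnn
    have harg : (c/σ) / Real.sqrt (1 - σ^2*k) = z σ + δ σ := by
      simp only [hz_def, hδ_def, hw_def]
      field_simp
      ring
    have hgz := gT_pos (z σ)
    have hU := gT_upper hzpos hδnn
    have hL := gT_lower hzpos hδnn
    have hwz : δ σ / z σ = w σ := by
      simp only [hδ_def]
      field_simp
    rw [harg]
    constructor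
    · rw [le_div_iff₀ hgz]
      calc Real.exp (-(z σ * δ σ + δ σ^2/2)) * (1 - w σ) * gT (z σ)
          = Real.exp (-(z σ * δ σ + δ σ^2/2)) * (1 - δ σ / z σ) * gT (z σ) := by rw [hwz]
        _ ≤ gT (z σ + δ σ) := hL
    · rw [div_le_iff₀ hgz]
      exact hU
  exact tendsto_of_tendsto_of_tendsto_of_le_of_le' hlow hup
    (hbound.mono fun σ h => h.1) (hbound.mono fun σ h => h.2)

/-- Residual lifetime convergence for the Gaussian tail: with
`R(x) = P(N > x)` for `N` standard normal and `z = (|x₀|/σ)√(2λ)`,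
for every `t ∈ ℝ`,
`lim_{σ→0⁺} R(z/√(1 - σ²e^{-2λt})) / R(z) = exp(-x₀² λ e^{-2λt})`. -/
theorem gaussian_tail_residual_lifetime
    (R : ℝ → ℝ) (hR : ∀ x, R x = (gaussianReal 0 1 (Set.Ioi x)).toReal)
    (lam x₀ : ℝ) (hlam : 0 < lam) (hx₀ : x₀ < 0) (t : ℝ) :
    Tendsto
      (fun σ : ℝ =>
        R ((|x₀| / σ) * Real.sqrt (2 * lam) / Real.sqrt (1 - σ ^ 2 * Real.exp (-2 * lam * t)))
          / R ((|x₀| / σ) * Real.sqrt (2 * lam)))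
      (nhdsWithin 0 (Set.Ioi 0))
      (nhds (Real.exp (-(x₀ ^ 2) * lam * Real.exp (-2 * lam * t)))) := by
  have hCpos : (0:ℝ) < (Real.sqrt (2*Real.pi))⁻¹ := by positivity
  have hC : (Real.sqrt (2*Real.pi))⁻¹ ≠ 0 := hCpos.ne'
  have hReq : ∀ x, R x = (Real.sqrt (2*Real.pi))⁻¹ * gT x := by
    intro x
    rw [hR, gaussianReal_apply_eq_integral 0 one_ne_zero,
      ENNReal.toReal_ofReal (integral_nonneg fun v => gaussianPDFReal_nonneg 0 1 v)]
    have hpdf : ∀ v : ℝ, gaussianPDFReal 0 1 v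
        = (Real.sqrt (2*Real.pi))⁻¹ * Real.exp (-v^2/2) := by
      intro v
      rw [gaussianPDFReal]
      push_cast
      norm_num
    simp_rw [hpdf]
    rw [integral_const_mul, gT]
  have hc : 0 < |x₀| * Real.sqrt (2*lam) :=
    mul_pos (abs_pos.mpr hx₀.ne) (Real.sqrt_pos.mpr (by linarith))
  have hk : (0:ℝ) < Real.exp (-2*lam*t) := Real.exp_pos _
  have main := ratio_tendsto hc hk
  have hfun : ∀ σ : ℝ,
      gT ((|x₀| * Real.sqrt (2*lam) / σ) / Real.sqrt (1 - σ^2 * Real.exp (-2*lam*t)))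
          / gT (|x₀| * Real.sqrt (2*lam) / σ)
      = R ((|x₀| / σ) * Real.sqrt (2 * lam)
            / Real.sqrt (1 - σ ^ 2 * Real.exp (-2 * lam * t)))
          / R ((|x₀| / σ) * Real.sqrt (2 * lam)) := by
    intro σ
    have harg : (|x₀| / σ) * Real.sqrt (2 * lam) = |x₀| * Real.sqrt (2*lam) / σ := by ring
    rw [harg, hReq, hReq, mul_div_mul_left _ _ hC]
  have hval : -((|x₀| * Real.sqrt (2*lam))^2 * Real.exp (-2*lam*t) / 2)
      = -(x₀ ^ 2) * lam * Real.exp (-2 * lam * t) := by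
    rw [mul_pow, sq_abs, Real.sq_sqrt (by linarith : (0:ℝ) ≤ 2*lam)]
    ring
  rw [← hval]
  exact main.congr hfun
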